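/- Let Δ ⊆ ℝ⁴ be a reflexive polytope and let v₁, v₂, v₃ ∈ Δ ∩ ℤ⁴ be ℝ-linearly independent points with Cone(v₁,v₂,v₃) ∩ Δ ∩ ℤ⁴ = {0, v₁, v₂, v₃}, and suppose v₁, v₂, v₃ do not lie in a common proper face of Δ. Fix distinct indices i, j, k with {i, j, k} = {1, 2, 3}. Then there is at most one lattice point m ∈ Δ* ∩ ℤ⁴ such that ⟨m, vᵢ⟩ = ⟨m, vⱼ⟩ = −1 and ⟨m, v_k⟩ = 0. -/

import Mathlib

open Pointwise

/-- The standard pairing `⟨m,n⟩ = ∑ i, mᵢ nᵢ` on `ℝ^d`. -/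
def pairing {d : ℕ} (m n : Fin d → ℝ) : ℝ := ∑ i, m i * n i

/-- A point of `ℝ^d` is a lattice point if all coordinates are integers. -/
def IsLatticePt {d : ℕ} (v : Fin d → ℝ) : Prop := ∀ i, ∃ n : ℤ, v i = (n : ℝ)

/-- The set of lattice points of `ℝ^d`. -/
def latticePts (d : ℕ) : Set (Fin d → ℝ) := {v | IsLatticePt v}

/-- A lattice polytope is the convex hull of finitely many lattice points. -/
def IsLatticePolytope {d : ℕ} (Δ : Set (Fin d → ℝ)) : Prop :=
  ∃ S : Finset (Fin d → ℝ), (S : Set (Fin d → ℝ)) ⊆ latticePts d ∧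
    Δ = convexHull ℝ (S : Set (Fin d → ℝ))

/-- The dual polytope `Δ* = {m : ⟨m,n⟩ ≥ -1 for all n ∈ Δ}`. -/
def dualPolytope {d : ℕ} (Δ : Set (Fin d → ℝ)) : Set (Fin d → ℝ) :=
  {m | ∀ n ∈ Δ, -1 ≤ pairing m n}

/-- A reflexive polytope: a lattice polytope with `0` in its interior
whose dual polytope is again a lattice polytope. -/
def IsReflexive {d : ℕ} (Δ : Set (Fin d → ℝ)) : Prop :=
  IsLatticePolytope Δ ∧ (0 : Fin d → ℝ) ∈ interior Δ ∧ IsLatticePolytope (dualPolytope Δ)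

/-- `Cone(v₁,…,v_k) = {r₁v₁ + ⋯ + r_kv_k : rᵢ ≥ 0}`. -/
def coneOf {d k : ℕ} (v : Fin k → (Fin d → ℝ)) : Set (Fin d → ℝ) :=
  {x | ∃ r : Fin k → ℝ, (∀ i, 0 ≤ r i) ∧ x = ∑ i, r i • v i}

/-- `r·∂Δ`, the frontier (topological boundary) of the dilate `rΔ`. -/
def bdry {d : ℕ} (r : ℝ) (Δ : Set (Fin d → ℝ)) : Set (Fin d → ℝ) := frontier (r • Δ)

/-- The points of `S` lie in a common proper face of `Δ`: there is `u` with
`⟨u,x⟩ ≤ 1` on `Δ` and `⟨u,v⟩ = 1` for all `v ∈ S`. -/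
def InCommonFace {d : ℕ} (Δ : Set (Fin d → ℝ)) (S : Set (Fin d → ℝ)) : Prop :=
  ∃ u : Fin d → ℝ, (∀ x ∈ Δ, pairing u x ≤ 1) ∧ ∀ v ∈ S, pairing u v = 1

/-- Coordinatewise cast of an integer vector to a real vector. -/
def toRealVec {d : ℕ} (n : Fin d → ℤ) : Fin d → ℝ := fun i => (n i : ℝ)

section aux
variable {d : ℕ}

lemma pairing_comm (x y : Fin d → ℝ) : pairing x y = pairing y x := by
  unfold pairing; exact Finset.sum_congr rfl fun i _ => mul_comm _ _

lemma pairing_add_right (u x y : Fin d → ℝ) :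
    pairing u (x + y) = pairing u x + pairing u y := by
  unfold pairing; rw [← Finset.sum_add_distrib]
  exact Finset.sum_congr rfl fun i _ => by simp [Pi.add_apply, mul_add]

lemma pairing_smul_right (u : Fin d → ℝ) (r : ℝ) (x : Fin d → ℝ) :
    pairing u (r • x) = r * pairing u x := by
  unfold pairing; rw [Finset.mul_sum]
  exact Finset.sum_congr rfl fun i _ => by simp [Pi.smul_apply]; ring

lemma pairing_zero_right (u : Fin d → ℝ) : pairing u 0 = 0 := by
  simp [pairing]

lemma pairing_smul_left (r : ℝ) (u x : Fin d → ℝ) :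
    pairing (r • u) x = r * pairing u x := by
  rw [pairing_comm, pairing_smul_right, pairing_comm]

lemma pairing_neg_left (u x : Fin d → ℝ) : pairing (-u) x = -pairing u x := by
  have := pairing_smul_left (-1) u x
  simpa using this

lemma pairing_sub_left (x y z : Fin d → ℝ) :
    pairing (x - y) z = pairing x z - pairing y z := by
  unfold pairing; rw [← Finset.sum_sub_distrib]
  exact Finset.sum_congr rfl fun i _ => by simp [Pi.sub_apply]; ring

lemma pairing_sum_right {α : Type*} (u : Fin d → ℝ) (s : Finset α) (f : α → (Fin d → ℝ)) :
    pairing u (∑ a ∈ s, f a) = ∑ a ∈ s, pairing u (f a) := by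
  classical
  induction s using Finset.induction_on with
  | empty => simp [pairing_zero_right]
  | @insert a s' h ih =>
      rw [Finset.sum_insert h, pairing_add_right, ih, Finset.sum_insert h]

lemma pairing_sum_left {α : Type*} (s : Finset α) (f : α → (Fin d → ℝ)) (x : Fin d → ℝ) :
    pairing (∑ a ∈ s, f a) x = ∑ a ∈ s, pairing (f a) x := by
  rw [pairing_comm, pairing_sum_right]
  exact Finset.sum_congr rfl fun a _ => pairing_comm _ _

lemma pairing_self_pos {x : Fin d → ℝ} (hx : x ≠ 0) : 0 < pairing x x := by
  have hne : ∃ i, x i ≠ 0 := by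
    by_contra h; push_neg at h; exact hx (funext fun i => h i)
  obtain ⟨i, hi⟩ := hne
  have : (0:ℝ) < ∑ j, x j * x j := by
    apply Finset.sum_pos' (fun j _ => mul_self_nonneg _)
    exact ⟨i, Finset.mem_univ i, mul_self_pos.mpr hi⟩
  simpa [pairing] using this

lemma latticePt_add {x y : Fin d → ℝ} (hx : IsLatticePt x) (hy : IsLatticePt y) :
    IsLatticePt (x + y) := by
  intro i
  obtain ⟨a, ha⟩ := hx i; obtain ⟨b, hb⟩ := hy i
  exact ⟨a + b, by push_cast [Pi.add_apply, ha, hb]; ring⟩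

lemma pairing_int {x y : Fin d → ℝ} (hx : IsLatticePt x) (hy : IsLatticePt y) :
    ∃ z : ℤ, pairing x y = (z : ℝ) := by
  choose a ha using hx
  choose b hb using hy
  refine ⟨∑ i, a i * b i, ?_⟩
  unfold pairing
  push_cast
  exact Finset.sum_congr rfl fun i _ => by rw [ha, hb]

lemma pairing_rep (f : (Fin d → ℝ) →L[ℝ] ℝ) : ∃ w : Fin d → ℝ, ∀ y, f y = pairing w y := by
  refine ⟨fun j => f (fun t => if j = t then 1 else 0), fun y => ?_⟩
  conv_lhs => rw [pi_eq_sum_univ y]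
  rw [map_sum]
  unfold pairing
  exact Finset.sum_congr rfl fun i _ => by rw [map_smul]; simp [mul_comm]

end aux

lemma sum_three {M : Type*} [AddCommMonoid M] {i j k : Fin 3} (hij : i ≠ j) (hik : i ≠ k)
    (hjk : j ≠ k) (f : Fin 3 → M) : ∑ t, f t = f i + f j + f k := by
  fin_cases i <;> fin_cases j <;> fin_cases k <;> simp_all [Fin.sum_univ_three] <;> abel

lemma cover3 {i j k : Fin 3} (hij : i ≠ j) (hik : i ≠ k) (hjk : j ≠ k) :
    ∀ t : Fin 3, t = i ∨ t = j ∨ t = k := by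
  have h : ∀ (i j k : Fin 3), i ≠ j → i ≠ k → j ≠ k → ∀ t, t = i ∨ t = j ∨ t = k := by decide
  exact h i j k hij hik hjk

/-- separation: a point outside Δ is cut off below `-1` by some lattice generator of `Δ*`. -/
lemma exists_dual_gen {Δ : Set (Fin 4 → ℝ)} (hΔ : IsReflexive Δ) {x : Fin 4 → ℝ}
    (hx : x ∉ Δ) : ∃ q, IsLatticePt q ∧ q ∈ dualPolytope Δ ∧ pairing q x < -1 := by
  classical
  obtain ⟨⟨S, hSlat, hSeq⟩, h0i, ⟨T, hTlat, hTeq⟩⟩ := hΔ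
  have h0 : (0 : Fin 4 → ℝ) ∈ Δ := interior_subset h0i
  have hclosed : IsClosed Δ := by
    rw [hSeq]; exact (S.finite_toSet.isCompact_convexHull ℝ).isClosed
  have hconv : Convex ℝ Δ := by rw [hSeq]; exact convex_convexHull _ _
  obtain ⟨f, u, hfu, hux⟩ := geometric_hahn_banach_closed_point hconv hclosed hx
  have hu0 : 0 < u := by have := hfu 0 h0; simpa using this
  obtain ⟨w, hw⟩ := pairing_rep f
  set u' : Fin 4 → ℝ := (-u⁻¹) • w with hu'
  have hmem : u' ∈ dualPolytope Δ := by
    intro y hy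
    rw [hu', pairing_smul_left, ← hw]
    have h1 : u⁻¹ * f y < 1 := by
      rw [← inv_mul_cancel₀ (ne_of_gt hu0)]
      exact mul_lt_mul_of_pos_left (hfu y hy) (by positivity)
    nlinarith
  have hx' : pairing u' x < -1 := by
    rw [hu', pairing_smul_left, ← hw]
    have h1 : 1 < u⁻¹ * f x := by
      rw [← inv_mul_cancel₀ (ne_of_gt hu0)]
      exact mul_lt_mul_of_pos_left hux (by positivity)
    nlinarith
  rw [hTeq, Finset.convexHull_eq] at hmem
  obtain ⟨γ, hγ0, hγ1, hγc⟩ := hmem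
  have hrep : u' = ∑ q ∈ T, γ q • q := by
    rw [← hγc, Finset.centerMass_eq_of_sum_1 _ _ hγ1]; rfl
  have hsum : ∑ q ∈ T, γ q * pairing q x < -1 := by
    calc ∑ q ∈ T, γ q * pairing q x = pairing u' x := by
          rw [hrep, pairing_sum_left]
          exact (Finset.sum_congr rfl fun q _ => (pairing_smul_left _ _ _)).symm
      _ < -1 := hx'
  have hex : ∃ q ∈ T, γ q ≠ 0 ∧ pairing q x < -1 := by
    by_contra hc
    push_neg at hc
    have hge : ∀ q ∈ T, γ q * (-1) ≤ γ q * pairing q x := by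
      intro q hq
      rcases eq_or_ne (γ q) 0 with h | h
      · simp [h]
      · have := hc q hq h
        exact mul_le_mul_of_nonneg_left this (hγ0 q hq)
    have : ∑ q ∈ T, γ q * (-1) ≤ ∑ q ∈ T, γ q * pairing q x := Finset.sum_le_sum hge
    rw [← Finset.sum_mul, hγ1] at this
    linarith
  obtain ⟨q, hqT, _, hqlt⟩ := hex
  refine ⟨q, hTlat hqT, ?_, hqlt⟩
  rw [hTeq]
  exact subset_convexHull ℝ (T : Set (Fin 4 → ℝ)) hqT


set_option maxHeartbeats 2000000 in
/-- In the setting of Statement 9, for fixed distinct indices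
`i, j, k` there is at most one lattice point `m ∈ Δ*` with
`⟨m,vᵢ⟩ = ⟨m,vⱼ⟩ = -1` and `⟨m,v_k⟩ = 0`. -/
theorem uniqueness_of_dual_lattice_point_for_three_cone
    (Δ : Set (Fin 4 → ℝ)) (hΔ : IsReflexive Δ)
    (v : Fin 3 → (Fin 4 → ℝ))
    (hvΔ : ∀ i, v i ∈ Δ) (hvL : ∀ i, IsLatticePt (v i))
    (hli : LinearIndependent ℝ v)
    (hcone : coneOf v ∩ Δ ∩ latticePts 4 = insert (0 : Fin 4 → ℝ) (Set.range v))
    (hface : ¬ InCommonFace Δ (Set.range v))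
    (i j k : Fin 3) (hij : i ≠ j) (hik : i ≠ k) (hjk : j ≠ k) :
    ∀ m m' : Fin 4 → ℝ,
      IsLatticePt m → m ∈ dualPolytope Δ →
      pairing m (v i) = -1 → pairing m (v j) = -1 → pairing m (v k) = 0 →
      IsLatticePt m' → m' ∈ dualPolytope Δ →
      pairing m' (v i) = -1 → pairing m' (v j) = -1 → pairing m' (v k) = 0 →
      m = m' := by
  classical
  intro m m' hmL hmD hmi hmj hmk hmL' hmD' hmi' hmj' hmk'
  by_contra hne
  obtain ⟨S, hSlat, hSeq⟩ := hΔ.1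
  have cover := cover3 hij hik hjk
  set nn : Fin 4 → ℝ := m' - m with hnn
  have hnne : nn ≠ 0 := sub_ne_zero.mpr (fun h => hne h.symm)
  have hnvi : pairing nn (v i) = 0 := by rw [hnn, pairing_sub_left, hmi', hmi]; ring
  have hnvj : pairing nn (v j) = 0 := by rw [hnn, pairing_sub_left, hmj', hmj]; ring
  have hnvk : pairing nn (v k) = 0 := by rw [hnn, pairing_sub_left, hmk', hmk]; ring
  have hnnpos : 0 < pairing nn nn := pairing_self_pos hnne
  -- membership of hull generators in Δ
  have hpΔ : ∀ p ∈ S, p ∈ Δ := fun p hp => by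
    rw [hSeq]; exact subset_convexHull ℝ _ hp
  -- common face helper
  have hcf : ∀ q : Fin 4 → ℝ, q ∈ dualPolytope Δ →
      (∀ t : Fin 3, pairing q (v t) = -1) → False := by
    intro q hqD hq
    apply hface
    refine ⟨-q, fun x hx => ?_, ?_⟩
    · rw [pairing_neg_left]; linarith [hqD x hx]
    · rintro _ ⟨t, rfl⟩
      rw [pairing_neg_left, hq t]; norm_num
  -- generic linear independence of distinct triples
  have huniqT : ∀ t1 t2 t3 : Fin 3, t1 ≠ t2 → t1 ≠ t3 → t2 ≠ t3 →
      ∀ x y z : ℝ, x • v t1 + y • v t2 + z • v t3 = 0 → x = 0 ∧ y = 0 ∧ z = 0 := by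
    intro t1 t2 t3 h12 h13 h23 x y z hxyz
    have hinj : Function.Injective ![t1, t2, t3] := by
      have h : ∀ (a b c : Fin 3), a ≠ b → a ≠ c → b ≠ c →
          Function.Injective ![a, b, c] := by decide
      exact h t1 t2 t3 h12 h13 h23
    have li3 := Fintype.linearIndependent_iff.mp (hli.comp ![t1,t2,t3] hinj)
    have hz := li3 ![x, y, z] (by
      simpa [Fin.sum_univ_three] using hxyz)
    exact ⟨by simpa using hz 0, by simpa using hz 1, by simpa using hz 2⟩
  -- linear independence of the four vectors
  have liW : LinearIndependent ℝ ![v i, v j, v k, nn] := by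
    rw [Fintype.linearIndependent_iff]
    intro g hg
    have hsum : g 0 • v i + g 1 • v j + g 2 • v k + g 3 • nn = 0 := by
      have := hg
      simpa [Fin.sum_univ_four, add_assoc] using this
    have h3 : g 3 = 0 := by
      have hp : pairing nn (g 0 • v i + g 1 • v j + g 2 • v k + g 3 • nn) = 0 := by
        rw [hsum, pairing_zero_right]
      rw [pairing_add_right, pairing_add_right, pairing_add_right,
          pairing_smul_right, pairing_smul_right, pairing_smul_right, pairing_smul_right,
          hnvi, hnvj, hnvk] at hp
      have h0 : g 3 * pairing nn nn = 0 := by linarith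
      exact (mul_eq_zero.mp h0).resolve_right (ne_of_gt hnnpos)
    rw [h3, zero_smul, add_zero] at hsum
    obtain ⟨e0, e1, e2⟩ := huniqT i j k hij hik hjk _ _ _ hsum
    intro t
    fin_cases t <;> simp_all
  have huniq4 : ∀ x y z w : ℝ, x • v i + y • v j + z • v k + w • nn = 0 →
      x = 0 ∧ y = 0 ∧ z = 0 ∧ w = 0 := by
    intro x y z w h
    have hz := Fintype.linearIndependent_iff.mp liW ![x,y,z,w] (by
      simpa [Fin.sum_univ_four, add_assoc] using h)
    exact ⟨by simpa using hz 0, by simpa using hz 1, by simpa using hz 2, by simpa using hz 3⟩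
  -- basis and third coordinate functional
  have hcard : Fintype.card (Fin 4) = Module.finrank ℝ (Fin 4 → ℝ) := by
    simp [Module.finrank_pi]
  obtain ⟨B, hBc⟩ : ∃ B : Module.Basis (Fin 4) ℝ (Fin 4 → ℝ), ⇑B = ![v i, v j, v k, nn] :=
    ⟨basisOfLinearIndependentOfCardEqFinrank liW hcard,
      coe_basisOfLinearIndependentOfCardEqFinrank liW hcard⟩
  have hB : ∀ t, B t = ![v i, v j, v k, nn] t := fun t => by rw [hBc]
  set g : (Fin 4 → ℝ) →ₗ[ℝ] ℝ := B.coord 2 with hgdef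
  have hgB : ∀ t : Fin 4, g (B t) = if t = 2 then 1 else 0 := by
    intro t
    rw [hgdef, Module.Basis.coord_apply, Module.Basis.repr_self, Finsupp.single_apply]
  have hgvi : g (v i) = 0 := by
    have := hgB 0; rw [hB 0] at this; simpa using this
  have hgvj : g (v j) = 0 := by
    have := hgB 1; rw [hB 1] at this; simpa using this
  have hgvk : g (v k) = 1 := by
    have := hgB 2; rw [hB 2] at this; simpa using this
  -- the point s/2
  set shalf : Fin 4 → ℝ := (2⁻¹ : ℝ) • (v i + v j + v k) with hshdef
  have hmsh : pairing m shalf = -1 := by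
    rw [hshdef, pairing_smul_right, pairing_add_right, pairing_add_right, hmi, hmj, hmk]
    norm_num
  have hm'sh : pairing m' shalf = -1 := by
    rw [hshdef, pairing_smul_right, pairing_add_right, pairing_add_right, hmi', hmj', hmk']
    norm_num
  have hgsh : g shalf = 2⁻¹ := by
    rw [hshdef, map_smul, map_add, map_add, hgvi, hgvj, hgvk]
    norm_num
  -- s/2 ∈ Δ
  have hshΔ : shalf ∈ Δ := by
    by_contra hout
    obtain ⟨q, hqL, hqD, hqlt⟩ := exists_dual_gen ⟨⟨S, hSlat, hSeq⟩, hΔ.2⟩ hout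
    obtain ⟨di, hdi⟩ := pairing_int hqL (hvL i)
    obtain ⟨dj, hdj⟩ := pairing_int hqL (hvL j)
    obtain ⟨dk, hdk⟩ := pairing_int hqL (hvL k)
    have h1 : (-1 : ℤ) ≤ di := by
      have := hqD (v i) (hvΔ i); rw [hdi] at this; exact_mod_cast this
    have h2 : (-1 : ℤ) ≤ dj := by
      have := hqD (v j) (hvΔ j); rw [hdj] at this; exact_mod_cast this
    have h3 : (-1 : ℤ) ≤ dk := by
      have := hqD (v k) (hvΔ k); rw [hdk] at this; exact_mod_cast this
    have hexp : pairing q shalf = 2⁻¹ * ((di : ℝ) + dj + dk) := by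
      rw [hshdef, pairing_smul_right, pairing_add_right, pairing_add_right, hdi, hdj, hdk]
    have hsR : ((di + dj + dk : ℤ) : ℝ) < -2 := by push_cast; linarith [hqlt, hexp]
    have hsZ : di + dj + dk < -2 := by exact_mod_cast hsR
    have heq : di = -1 ∧ dj = -1 ∧ dk = -1 := by omega
    refine hcf q hqD fun t => ?_
    rcases cover t with rfl | rfl | rfl
    · rw [hdi, heq.1]; norm_num
    · rw [hdj, heq.2.1]; norm_num
    · rw [hdk, heq.2.2]; norm_num
  -- convex combination representation of s/2
  rw [hSeq, Finset.convexHull_eq] at hshΔ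
  obtain ⟨wt, hwt0, hwt1, hwtc⟩ := hshΔ
  have hrepS : ∑ p ∈ S, wt p • p = shalf := by
    rw [← hwtc, Finset.centerMass_eq_of_sum_1 _ _ hwt1]; rfl
  have hkey : ∀ mm : Fin 4 → ℝ, mm ∈ dualPolytope Δ → pairing mm shalf = -1 →
      ∀ p ∈ S, wt p ≠ 0 → pairing mm p = -1 := by
    intro mm hmmD hmmsh
    have hA : ∑ p ∈ S, wt p * pairing mm p = -1 := by
      calc ∑ p ∈ S, wt p * pairing mm p = pairing mm shalf := by
            rw [← hrepS, pairing_sum_right]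
            exact Finset.sum_congr rfl fun p _ => (pairing_smul_right _ _ _).symm
        _ = -1 := hmmsh
    have hFsum : ∑ p ∈ S, wt p * (pairing mm p + 1) = 0 := by
      have hsplit : ∑ p ∈ S, wt p * (pairing mm p + 1)
          = (∑ p ∈ S, wt p * pairing mm p) + ∑ p ∈ S, wt p := by
        rw [← Finset.sum_add_distrib]
        exact Finset.sum_congr rfl fun p _ => by ring
      rw [hsplit, hA, hwt1]; ring
    have hF0 : ∀ p ∈ S, 0 ≤ wt p * (pairing mm p + 1) := fun p hp =>
      mul_nonneg (hwt0 p hp) (by linarith [hmmD p (hpΔ p hp)])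
    have hall := (Finset.sum_eq_zero_iff_of_nonneg hF0).mp hFsum
    intro p hp hne0
    rcases mul_eq_zero.mp (hall p hp) with h | h
    · exact absurd h hne0
    · linarith
  -- a generator of weight > 0 with large third coordinate
  have hex : ∃ p ∈ S, wt p ≠ 0 ∧ 2⁻¹ ≤ g p := by
    by_contra hc
    push_neg at hc
    have hgs : ∑ p ∈ S, wt p * g p = 2⁻¹ := by
      calc ∑ p ∈ S, wt p * g p = g shalf := by
            rw [← hrepS, map_sum]
            exact Finset.sum_congr rfl fun p _ => by rw [map_smul]; rfl
        _ = 2⁻¹ := hgsh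
    have hpos : ∃ p ∈ S, 0 < wt p := by
      by_contra h'
      push_neg at h'
      have : ∑ p ∈ S, wt p ≤ 0 := Finset.sum_nonpos h'
      rw [hwt1] at this; linarith
    obtain ⟨p₀, hp₀, hwp₀⟩ := hpos
    have hstrict : ∑ p ∈ S, wt p * g p < ∑ p ∈ S, wt p * 2⁻¹ := by
      apply Finset.sum_lt_sum
      · intro p hp
        rcases eq_or_ne (wt p) 0 with h | h
        · simp [h]
        · exact le_of_lt (mul_lt_mul_of_pos_left (hc p hp h)
            (lt_of_le_of_ne (hwt0 p hp) (Ne.symm h)))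
      · exact ⟨p₀, hp₀, mul_lt_mul_of_pos_left (hc p₀ hp₀ (ne_of_gt hwp₀)) hwp₀⟩
    rw [← Finset.sum_mul, hwt1, hgs] at hstrict
    linarith
  obtain ⟨p, hpS, hwp, hgp⟩ := hex
  have hmp : pairing m p = -1 := hkey m hmD hmsh p hpS hwp
  have hm'p : pairing m' p = -1 := hkey m' hmD' hm'sh p hpS hwp
  -- coordinates of p
  set a := B.repr p 0 with hadef
  set b := B.repr p 1 with hbdef
  set c := B.repr p 2 with hcdef
  set tt := B.repr p 3 with httdef
  have hrepr : a • v i + b • v j + c • v k + tt • nn = p := by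
    have hsr := B.sum_repr p
    rw [Fin.sum_univ_four] at hsr
    rw [hB 0, hB 1, hB 2, hB 3] at hsr
    simpa [hadef, hbdef, hcdef, httdef, add_assoc] using hsr
  have hc2 : 2⁻¹ ≤ c := by
    have : g p = c := by rw [hgdef, Module.Basis.coord_apply, hcdef]
    rw [this] at hgp; exact hgp
  have hnnp : pairing nn p = 0 := by
    rw [hnn, pairing_sub_left, hm'p, hmp]; ring
  have htt : tt = 0 := by
    rw [← hrepr, pairing_add_right, pairing_add_right, pairing_add_right,
        pairing_smul_right, pairing_smul_right, pairing_smul_right, pairing_smul_right,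
        hnvi, hnvj, hnvk] at hnnp
    have h0 : tt * pairing nn nn = 0 := by linarith
    exact (mul_eq_zero.mp h0).resolve_right (ne_of_gt hnnpos)
  have hrepr' : a • v i + b • v j + c • v k = p := by
    rw [htt, zero_smul, add_zero] at hrepr; exact hrepr
  have hab : a + b = 1 := by
    have h := hmp
    rw [← hrepr', pairing_add_right, pairing_add_right,
        pairing_smul_right, pairing_smul_right, pairing_smul_right, hmi, hmj, hmk] at h
    linarith
  -- for each distinct triple, a dual generator with pattern (-1, ≥0, -1)
  have hside : ∀ t1 t2 t3 : Fin 3, t1 ≠ t2 → t1 ≠ t3 → t2 ≠ t3 →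
      ∃ q, q ∈ dualPolytope Δ ∧ pairing q (v t1) = -1 ∧ pairing q (v t3) = -1 ∧
        0 ≤ pairing q (v t2) := by
    intro t1 t2 t3 h12 h13 h23
    have hnot : v t1 + v t3 ∉ Δ := by
      intro hin
      have hc3 : v t1 + v t3 ∈ coneOf v ∩ Δ ∩ latticePts 4 := by
        refine ⟨⟨⟨fun t => if t = t1 then 1 else if t = t3 then 1 else 0,
          fun t => by dsimp only; split_ifs <;> norm_num, ?_⟩, hin⟩,
          latticePt_add (hvL t1) (hvL t3)⟩
        rw [sum_three h12 h13 h23]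
        simp [h23, Ne.symm h12, h13]
      rw [hcone] at hc3
      rcases Set.mem_insert_iff.mp hc3 with h0 | hr
      · have : (1:ℝ) • v t1 + (0:ℝ) • v t2 + (1:ℝ) • v t3 = 0 := by
          rw [one_smul, zero_smul, one_smul]; simpa using h0
        have := (huniqT t1 t2 t3 h12 h13 h23 _ _ _ this).1
        norm_num at this
      · obtain ⟨t, ht⟩ := Set.mem_range.mp hr
        have hcov := cover3 h12 h13 h23
        rcases hcov t with h | h | h
        · rw [h] at ht
          have h3 : v t3 = 0 := by
            apply add_left_cancel (a := v t1); rw [add_zero]; exact ht.symm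
          have hrel : (0:ℝ) • v t1 + (0:ℝ) • v t2 + (1:ℝ) • v t3 = 0 := by
            rw [one_smul, zero_smul, zero_smul, h3]; abel
          have := (huniqT t1 t2 t3 h12 h13 h23 _ _ _ hrel).2.2
          norm_num at this
        · rw [h] at ht
          have hrel : (1:ℝ) • v t1 + (-1:ℝ) • v t2 + (1:ℝ) • v t3 = 0 := by
            simp only [one_smul, neg_one_smul, ht]; abel
          have := (huniqT t1 t2 t3 h12 h13 h23 _ _ _ hrel).1
          norm_num at this
        · rw [h] at ht
          have h1 : v t1 = 0 := by
            apply add_right_cancel (b := v t3); rw [zero_add]; exact ht.symm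
          have hrel : (1:ℝ) • v t1 + (0:ℝ) • v t2 + (0:ℝ) • v t3 = 0 := by
            rw [one_smul, zero_smul, zero_smul, h1]; abel
          have := (huniqT t1 t2 t3 h12 h13 h23 _ _ _ hrel).1
          norm_num at this
    obtain ⟨q, hqL, hqD, hqlt⟩ := exists_dual_gen ⟨⟨S, hSlat, hSeq⟩, hΔ.2⟩ hnot
    obtain ⟨d1, hd1⟩ := pairing_int hqL (hvL t1)
    obtain ⟨d2, hd2⟩ := pairing_int hqL (hvL t2)
    obtain ⟨d3, hd3⟩ := pairing_int hqL (hvL t3)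
    have hb1 : (-1 : ℤ) ≤ d1 := by
      have := hqD (v t1) (hvΔ t1); rw [hd1] at this; exact_mod_cast this
    have hb2 : (-1 : ℤ) ≤ d2 := by
      have := hqD (v t2) (hvΔ t2); rw [hd2] at this; exact_mod_cast this
    have hb3 : (-1 : ℤ) ≤ d3 := by
      have := hqD (v t3) (hvΔ t3); rw [hd3] at this; exact_mod_cast this
    have hsum13 : d1 + d3 < -1 := by
      have : pairing q (v t1 + v t3) = ((d1 + d3 : ℤ) : ℝ) := by
        rw [pairing_add_right, hd1, hd3]; push_cast; ring
      rw [this] at hqlt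
      exact_mod_cast hqlt
    have h11 : d1 = -1 ∧ d3 = -1 := by omega
    have hd2pos : 0 ≤ d2 := by
      by_contra hneg
      push_neg at hneg
      have hd2m : d2 = -1 := by omega
      refine hcf q hqD fun t => ?_
      rcases cover3 h12 h13 h23 t with rfl | rfl | rfl
      · rw [hd1, h11.1]; norm_num
      · rw [hd2, hd2m]; norm_num
      · rw [hd3, h11.2]; norm_num
    refine ⟨q, hqD, ?_, ?_, ?_⟩
    · rw [hd1, h11.1]; norm_num
    · rw [hd3, h11.2]; norm_num
    · rw [hd2]; exact_mod_cast hd2pos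
  obtain ⟨q1, hq1D, hq1i, hq1k, hq1j⟩ := hside i j k hij hik hjk
  obtain ⟨q2, hq2D, hq2j, hq2k, hq2i⟩ := hside j i k (Ne.symm hij) hjk hik
  -- pairing expansions against p
  have hq1p : -1 ≤ pairing q1 p := hq1D p (hpΔ p hpS)
  have hq2p : -1 ≤ pairing q2 p := hq2D p (hpΔ p hpS)
  have hq1e : pairing q1 p = a * (-1) + b * pairing q1 (v j) + c * (-1) := by
    rw [← hrepr', pairing_add_right, pairing_add_right,
        pairing_smul_right, pairing_smul_right, pairing_smul_right, hq1i, hq1k]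
  have hq2e : pairing q2 p = a * pairing q2 (v i) + b * (-1) + c * (-1) := by
    rw [← hrepr', pairing_add_right, pairing_add_right,
        pairing_smul_right, pairing_smul_right, pairing_smul_right, hq2j, hq2k]
  have ha : 0 < a := by
    by_contra h
    push_neg at h
    have hmul : a * pairing q2 (v i) ≤ 0 := mul_nonpos_of_nonpos_of_nonneg h hq2i
    nlinarith
  have hbpos : 0 < b := by
    by_contra h
    push_neg at h
    have hmul : b * pairing q1 (v j) ≤ 0 := mul_nonpos_of_nonpos_of_nonneg h hq1j
    nlinarith
  -- p is a new lattice point of the cone: contradiction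
  have hpc : p ∈ coneOf v ∩ Δ ∩ latticePts 4 := by
    refine ⟨⟨⟨fun t => if t = i then a else if t = j then b else c,
      fun t => by dsimp only; split_ifs <;> linarith, ?_⟩, hpΔ p hpS⟩, hSlat hpS⟩
    rw [sum_three hij hik hjk]
    rw [← hrepr']
    simp [hij, Ne.symm hij, hik, hjk, Ne.symm hik, Ne.symm hjk]
  rw [hcone] at hpc
  rcases Set.mem_insert_iff.mp hpc with h0 | hr
  · have : a • v i + b • v j + c • v k = 0 := by rw [hrepr', h0]
    have hz := huniqT i j k hij hik hjk _ _ _ this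
    linarith [hz.1, hz.2.1]
  · obtain ⟨t, ht⟩ := Set.mem_range.mp hr
    rcases cover t with h | h | h
    · rw [h] at ht
      have hrel : (a - 1) • v i + b • v j + c • v k = 0 := by
        rw [sub_smul, one_smul]
        calc (a • v i - v i) + b • v j + c • v k
            = (a • v i + b • v j + c • v k) - v i := by abel
          _ = p - v i := by rw [hrepr']
          _ = 0 := by rw [← ht]; abel
      have hz := huniqT i j k hij hik hjk _ _ _ hrel
      linarith [hz.2.2, hc2]
    · rw [h] at ht
      have hrel : a • v i + (b - 1) • v j + c • v k = 0 := by
        rw [sub_smul, one_smul]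
        calc a • v i + (b • v j - v j) + c • v k
            = (a • v i + b • v j + c • v k) - v j := by abel
          _ = p - v j := by rw [hrepr']
          _ = 0 := by rw [← ht]; abel
      have hz := huniqT i j k hij hik hjk _ _ _ hrel
      linarith [hz.2.2, hc2]
    · rw [h] at ht
      have hrel : a • v i + b • v j + (c - 1) • v k = 0 := by
        rw [sub_smul, one_smul]
        calc a • v i + b • v j + (c • v k - v k)
            = (a • v i + b • v j + c • v k) - v k := by abel
          _ = p - v k := by rw [hrepr']
          _ = 0 := by rw [← ht]; abel
      have hz := huniqT i j k hij hik hjk _ _ _ hrel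
      linarith [hz.1]
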